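/- For every finite set P of propositional variables, the formula ⋀_{p∈P} p ∧ □⋀_{p∈P} p is satisfiable and complete for each of the logics KD4, S4, KD4+5, and S4+5. -/

import Mathlib

/-- Modal formulas in negation normal form, as in the paper:
φ ::= ⊥ | ⊤ | p | ¬p | φ∧φ | φ∨φ | □φ | ◇φ. -/
inductive Form : Type where
  | bot : Form
  | top : Form
  | pos : ℕ → Form
  | npos : ℕ → Form
  | and : Form → Form → Form
  | or : Form → Form → Form
  | box : Form → Form
  | dia : Form → Form
deriving DecidableEq

namespace Form

/-- Negation, defined as usual (by De Morgan dualities). -/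
def neg : Form → Form
  | bot => top
  | top => bot
  | pos p => npos p
  | npos p => pos p
  | and φ ψ => or φ.neg ψ.neg
  | or φ ψ => and φ.neg ψ.neg
  | box φ => dia φ.neg
  | dia φ => box φ.neg

/-- Implication φ → ψ, defined as usual. -/
def imp (φ ψ : Form) : Form := or φ.neg ψ

/-- Bi-implication φ ↔ ψ, defined as usual. -/
def biimp (φ ψ : Form) : Form := and (imp φ ψ) (imp ψ φ)

/-- P(φ): the set of propositional variables occurring in φ. -/
def vars : Form → Finset ℕ
  | bot => ∅
  | top => ∅
  | pos p => {p}
  | npos p => {p}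
  | and φ ψ => φ.vars ∪ ψ.vars
  | or φ ψ => φ.vars ∪ ψ.vars
  | box φ => φ.vars
  | dia φ => φ.vars

/-- Modal depth. -/
def md : Form → ℕ
  | bot => 0
  | top => 0
  | pos _ => 0
  | npos _ => 0
  | and φ ψ => max φ.md ψ.md
  | or φ ψ => max φ.md ψ.md
  | box φ => φ.md + 1
  | dia φ => φ.md + 1

/-- sub(φ): the set of subformulas of φ. -/
def subf : Form → Finset Form
  | bot => {bot}
  | top => {top}
  | pos p => {pos p}
  | npos p => {npos p}
  | and φ ψ => insert (and φ ψ) (φ.subf ∪ ψ.subf)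
  | or φ ψ => insert (or φ ψ) (φ.subf ∪ ψ.subf)
  | box φ => insert (box φ) φ.subf
  | dia φ => insert (dia φ) φ.subf

/-- s̄ub(φ) = sub(φ) ∪ {¬ψ : ψ ∈ sub(φ)}. -/
def subBar (φ : Form) : Finset Form := φ.subf ∪ φ.subf.image neg

/-- □^k φ : k nested boxes. -/
def boxIter : ℕ → Form → Form
  | 0, φ => φ
  | n + 1, φ => box (boxIter n φ)

def isDia : Form → Bool
  | dia _ => true
  | _ => false

def isBox : Form → Bool
  | box _ => true
  | _ => false

end Form

/-- Big conjunction over a finite set of formulas (⋀∅ = ⊤). -/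
noncomputable def bigAnd (s : Finset Form) : Form := s.toList.foldr Form.and Form.top

/-- Big disjunction over a finite set of formulas (⋁∅ = ⊥). -/
noncomputable def bigOr (s : Finset Form) : Form := s.toList.foldr Form.or Form.bot

/-- th(a) = ⋀ a. -/
noncomputable def th (a : Finset Form) : Form := bigAnd a

/-- A finite Kripke model: a nonempty finite set of states, an accessibility
relation and a valuation. -/
structure Model : Type 1 where
  W : Type
  nonempty : Nonempty W
  finite : Finite W
  R : W → W → Prop
  V : W → Set ℕ

/-- Satisfaction M,w ⊨ φ. -/
def Model.sat (M : Model) : M.W → Form → Prop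
  | _, .bot => False
  | _, .top => True
  | w, .pos p => p ∈ M.V w
  | w, .npos p => p ∉ M.V w
  | w, .and φ ψ => M.sat w φ ∧ M.sat w ψ
  | w, .or φ ψ => M.sat w φ ∨ M.sat w ψ
  | w, .box φ => ∀ v, M.R w v → M.sat v φ
  | w, .dia φ => ∃ v, M.R w v ∧ M.sat v φ

/-- The six base logics K, D, T, K4, KD4, S4. -/
inductive BaseLogic : Type where
  | K | D | T | K4 | KD4 | S4
deriving DecidableEq

/-- A logic: a base logic, possibly extended by axiom 5. -/
structure Logic : Type where
  base : BaseLogic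
  has5 : Bool
deriving DecidableEq

def Logic.K : Logic := ⟨.K, false⟩
def Logic.D : Logic := ⟨.D, false⟩
def Logic.T : Logic := ⟨.T, false⟩
def Logic.K4 : Logic := ⟨.K4, false⟩
def Logic.KD4 : Logic := ⟨.KD4, false⟩
def Logic.S4 : Logic := ⟨.S4, false⟩

/-- l + 5. -/
def BaseLogic.plus5 (b : BaseLogic) : Logic := ⟨b, true⟩

/-- M is a model for the logic l (frame conditions). -/
def Model.IsFor (M : Model) (l : Logic) : Prop :=
  (match l.base with
    | .K => True
    | .D => ∀ w, ∃ v, M.R w v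
    | .T => ∀ w, M.R w w
    | .K4 => ∀ a b c, M.R a b → M.R b c → M.R a c
    | .KD4 => (∀ w, ∃ v, M.R w v) ∧ (∀ a b c, M.R a b → M.R b c → M.R a c)
    | .S4 => (∀ w, M.R w w) ∧ (∀ a b c, M.R a b → M.R b c → M.R a c))
  ∧ (l.has5 = true → ∀ a b c, M.R a b → M.R a c → M.R b c)

/-- φ is satisfiable for l: satisfied at some state of some finite model for l. -/
def Satisfiable (l : Logic) (φ : Form) : Prop :=
  ∃ M : Model, M.IsFor l ∧ ∃ w : M.W, M.sat w φ

/-- φ is valid for l: satisfied at every state of every finite model for l. -/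
def Valid (l : Logic) (φ : Form) : Prop :=
  ∀ M : Model, M.IsFor l → ∀ w : M.W, M.sat w φ

/-- φ is complete for l: for every ψ ∈ L(P(φ)), φ→ψ or φ→¬ψ is valid for l. -/
def Complete (l : Logic) (φ : Form) : Prop :=
  ∀ ψ : Form, ψ.vars ⊆ φ.vars → (Valid l (φ.imp ψ) ∨ Valid l (φ.imp ψ.neg))

/-- Z is a bisimulation modulo P from M to M'. -/
def IsBisim (P : Set ℕ) (M M' : Model) (Z : M.W → M'.W → Prop) : Prop :=
  (∃ s s', Z s s') ∧
  ∀ s s', Z s s' →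
    (M.V s ∩ P = M'.V s' ∩ P) ∧
    (∀ t, M.R s t → ∃ t', M'.R s' t' ∧ Z t t') ∧
    (∀ t', M'.R s' t' → ∃ t, M.R s t ∧ Z t t')

/-- (M,a) ∼_P (M',a'). -/
def Bisimilar (P : Set ℕ) (M : Model) (a : M.W) (M' : Model) (a' : M'.W) : Prop :=
  ∃ Z, IsBisim P M M' Z ∧ Z a a'

/-- (M,a) ≡_P (M',a'): the two pointed models satisfy the same formulas of L(P). -/
def EquivP (P : Set ℕ) (M : Model) (a : M.W) (M' : Model) (a' : M'.W) : Prop :=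
  ∀ φ : Form, ↑φ.vars ⊆ P → (M.sat a φ ↔ M'.sat a' φ)

/-- (M,s) is flat (for base logic l, with axiom 5): the carrier is {s}∪W and
R = R1 ∪ R2 with R1 ⊆ {s}×W, R2 an equivalence relation on W, and s ∈ W if
l ∈ {T,S4}. -/
def Flat (l : BaseLogic) (M : Model) (s : M.W) : Prop :=
  ∃ W : Set M.W, (∀ w, w = s ∨ w ∈ W) ∧
    ∃ R1 R2 : M.W → M.W → Prop,
      (∀ x y, M.R x y ↔ (R1 x y ∨ R2 x y)) ∧
      (∀ x y, R1 x y → x = s ∧ y ∈ W) ∧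
      (∀ x y, R2 x y → x ∈ W ∧ y ∈ W) ∧
      (∀ x ∈ W, R2 x x) ∧
      (∀ x y, R2 x y → R2 y x) ∧
      (∀ x y z, R2 x y → R2 y z → R2 x z) ∧
      ((l = .T ∨ l = .S4) → s ∈ W)

/-- A maximal state for l with respect to φ: a maximally l-consistent subset
of s̄ub(φ). -/
def MaxState (l : Logic) (φ : Form) (a : Finset Form) : Prop :=
  a ⊆ φ.subBar ∧ Satisfiable l (th a) ∧ ∀ ψ ∈ φ.subf, ψ ∈ a ∨ ψ.neg ∈ a

/-- D(x) = {◇ψ : ◇ψ ∈ x}. -/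
def DSet (x : Finset Form) : Finset Form := x.filter (fun ψ => ψ.isDia = true)

/-- B(x) = {□ψ : □ψ ∈ x}. -/
def BSet (x : Finset Form) : Finset Form := x.filter (fun ψ => ψ.isBox = true)

/-- A view: a parent-state and a finite set of children-states. -/
structure View : Type where
  parent : Finset Form
  children : Finset (Finset Form)

/-- The view is with respect to φ: all its states are subsets of s̄ub(φ). -/
def View.WF (φ : Form) (S : View) : Prop :=
  S.parent ⊆ φ.subBar ∧ ∀ c ∈ S.children, c ⊆ φ.subBar

/-- A set of formulas is l-closed. -/
def LClosed (l : Logic) (P : Finset ℕ) (s : Finset Form) : Prop :=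
  (∀ φ1 φ2 : Form, Form.and φ1 φ2 ∈ s → φ1 ∈ s ∧ φ2 ∈ s) ∧
  (∀ φ1 φ2 : Form, Form.or φ1 φ2 ∈ s → φ1 ∈ s ∨ φ2 ∈ s) ∧
  ((l.base = .T ∨ l.base = .S4) → ∀ ψ : Form, Form.box ψ ∈ s → ψ ∈ s) ∧
  (∀ p ∈ P, Form.pos p ∈ s ∨ Form.npos p ∈ s)

/-- The view S is l-complete. -/
def ViewLComplete (l : Logic) (P : Finset ℕ) (S : View) : Prop :=
  LClosed l P S.parent ∧
  (∀ c ∈ S.children, LClosed l P c) ∧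
  (∀ ψ : Form, Form.dia ψ ∈ S.parent → ∃ c ∈ S.children, ψ ∈ c) ∧
  (∀ ψ : Form, Form.box ψ ∈ S.parent → ∀ c ∈ S.children, ψ ∈ c) ∧
  ((l.base = .K4 ∨ l.base = .KD4 ∨ l.base = .S4) →
    ∀ ψ : Form, Form.box ψ ∈ S.parent → ∀ c ∈ S.children, Form.box ψ ∈ c) ∧
  (l.base = .KD4 → S.children.Nonempty)

/-- The view S is consistent for l: every one of its states is consistent. -/
def ViewConsistent (l : Logic) (S : View) : Prop :=
  Satisfiable l (th S.parent) ∧ ∀ c ∈ S.children, Satisfiable l (th c)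

/-- d = max{md(th(c')) : c' ∈ C(S)}. -/
noncomputable def childDepth (S : View) : ℕ := S.children.sup (fun c => (th c).md)

/-- A K-maximal child-state: a maximally K-consistent subset of s̄ub_d(φ). -/
def KMaxChild (φ : Form) (d : ℕ) (c : Finset Form) : Prop :=
  c ⊆ φ.subBar.filter (fun ψ => ψ.md ≤ d) ∧
  Satisfiable Logic.K (th c) ∧
  ∀ ψ ∈ φ.subf, ψ.md ≤ d → (ψ ∈ c ∨ ψ.neg ∈ c)

/-- S' completes S (for logic l, with respect to φ). -/
def ViewCompletes (l : Logic) (φ : Form) (S' S : View) : Prop :=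
  ViewLComplete l φ.vars S' ∧
  S.parent ⊆ S'.parent ∧
  (∀ a ∈ S.children, ∃ a' ∈ S'.children, a ⊆ a') ∧
  (l.base = .K → ∀ a' ∈ S'.children, KMaxChild φ (childDepth S') a') ∧
  (l.base ≠ .K → ∀ a' ∈ S'.children, MaxState l φ a')

/-- The depth-0 normal form ⋀_{p∈S} p ∧ ⋀_{p∈P∖S} ¬p. -/
noncomputable def nf0 (P S : Finset ℕ) : Form :=
  Form.and (bigAnd (S.image Form.pos)) (bigAnd ((P \ S).image Form.npos))

/-- Fine's normal forms F_P^d. -/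
noncomputable def NF (P : Finset ℕ) : ℕ → Set Form
  | 0 => { χ | ∃ S ⊆ P, χ = nf0 P S }
  | d + 1 => { χ | ∃ S : Finset Form, ↑S ⊆ NF P d ∧ ∃ S0 ⊆ P,
      χ = Form.and (nf0 P S0)
            (Form.and (bigAnd (S.image Form.dia)) (Form.box (bigOr S))) }

/-- φ is complete up to its depth for l. -/
def CompleteUpToDepth (l : Logic) (φ : Form) : Prop :=
  ∀ ψ : Form, ψ.vars ⊆ φ.vars → ψ.md ≤ φ.md →
    (Valid l (φ.imp ψ) ∨ Valid l (φ.imp ψ.neg))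

/-- The one-point total model with valuation P. -/
def oneModel (P : Finset ℕ) : Model :=
  ⟨Unit, ⟨()⟩, inferInstance, fun _ _ => True, fun _ => ↑P⟩

lemma sat_foldr (M : Model) (v : M.W) (L : List Form) :
    M.sat v (L.foldr Form.and Form.top) ↔ ∀ χ ∈ L, M.sat v χ := by
  induction L with
  | nil => simp [Model.sat]
  | cons a L ih => simp [Model.sat, ih]

lemma sat_bigAnd (M : Model) (v : M.W) (s : Finset Form) :
    M.sat v (bigAnd s) ↔ ∀ χ ∈ s, M.sat v χ := by
  simp [bigAnd, sat_foldr]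

lemma mem_vars_foldr (L : List Form) (p : ℕ) :
    p ∈ (L.foldr Form.and Form.top).vars ↔ ∃ χ ∈ L, p ∈ χ.vars := by
  induction L with
  | nil => simp [Form.vars]
  | cons a L ih => simp [Form.vars, ih]

lemma vars_bigAnd_pos (P : Finset ℕ) : (bigAnd (P.image Form.pos)).vars ⊆ P := by
  intro p hp
  rw [bigAnd, mem_vars_foldr] at hp
  obtain ⟨χ, hχ, hpχ⟩ := hp
  simp only [Finset.mem_toList, Finset.mem_image] at hχ
  obtain ⟨q, hq, rfl⟩ := hχ
  simp [Form.vars] at hpχ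
  subst hpχ; exact hq

lemma sat_neg (M : Model) (ψ : Form) : ∀ v, (M.sat v ψ.neg ↔ ¬ M.sat v ψ) := by
  induction ψ with
  | bot => simp [Form.neg, Model.sat]
  | top => simp [Form.neg, Model.sat]
  | pos p => simp [Form.neg, Model.sat]
  | npos p => simp [Form.neg, Model.sat]
  | and φ ψ ih1 ih2 => intro v; simp only [Form.neg, Model.sat, ih1, ih2]; tauto
  | or φ ψ ih1 ih2 => intro v; simp only [Form.neg, Model.sat, ih1, ih2]; tauto
  | box φ ih => intro v; simp [Form.neg, Model.sat, ih]
  | dia φ ih => intro v; simp [Form.neg, Model.sat, ih]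

lemma transfer (M : Model) (w : M.W) (hser : ∀ u, ∃ v, M.R u v)
    (htr : ∀ a b c, M.R a b → M.R b c → M.R a c) (P : Finset ℕ)
    (hG : ∀ v, (v = w ∨ M.R w v) → ∀ p ∈ P, p ∈ M.V v) :
    ∀ ψ : Form, ψ.vars ⊆ P → ∀ v, (v = w ∨ M.R w v) →
      (M.sat v ψ ↔ (oneModel P).sat () ψ) := by
  intro ψ
  induction ψ with
  | bot => intro _ v _; simp [Model.sat]
  | top => intro _ v _; simp [Model.sat]
  | pos p =>
    intro hv v h
    have hp : p ∈ P := hv (by simp [Form.vars])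
    simp only [Model.sat, oneModel]
    constructor
    · intro _; exact hp
    · intro _; exact hG v h p hp
  | npos p =>
    intro hv v h
    have hp : p ∈ P := hv (by simp [Form.vars])
    simp only [Model.sat, oneModel]
    constructor
    · intro hn; exact absurd (hG v h p hp) hn
    · intro hn; exact absurd hp hn
  | and φ ψ ih1 ih2 =>
    intro hv v h
    have h1 : φ.vars ⊆ P := fun p hp => hv (by simp [Form.vars]; exact Or.inl hp)
    have h2 : ψ.vars ⊆ P := fun p hp => hv (by simp [Form.vars]; exact Or.inr hp)
    simp only [Model.sat]
    rw [ih1 h1 v h, ih2 h2 v h]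
  | or φ ψ ih1 ih2 =>
    intro hv v h
    have h1 : φ.vars ⊆ P := fun p hp => hv (by simp [Form.vars]; exact Or.inl hp)
    have h2 : ψ.vars ⊆ P := fun p hp => hv (by simp [Form.vars]; exact Or.inr hp)
    simp only [Model.sat]
    rw [ih1 h1 v h, ih2 h2 v h]
  | box φ ih =>
    intro hv v h
    have h1 : φ.vars ⊆ P := hv
    have hsucc : ∀ u, M.R v u → (u = w ∨ M.R w u) := by
      intro u hru
      rcases h with rfl | h
      · exact Or.inr hru
      · exact Or.inr (htr _ _ _ h hru)
    simp only [Model.sat]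
    constructor
    · intro hb u _
      obtain ⟨t, ht⟩ := hser v
      exact (ih h1 t (hsucc t ht)).mp (hb t ht)
    · intro hb u hru
      exact (ih h1 u (hsucc u hru)).mpr (hb () trivial)
  | dia φ ih =>
    intro hv v h
    have h1 : φ.vars ⊆ P := hv
    have hsucc : ∀ u, M.R v u → (u = w ∨ M.R w u) := by
      intro u hru
      rcases h with rfl | h
      · exact Or.inr hru
      · exact Or.inr (htr _ _ _ h hru)
    simp only [Model.sat]
    constructor
    · rintro ⟨u, hru, hs⟩
      exact ⟨(), trivial, (ih h1 u (hsucc u hru)).mp hs⟩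
    · rintro ⟨_, _, hs⟩
      obtain ⟨t, ht⟩ := hser v
      exact ⟨t, ht, (ih h1 t (hsucc t ht)).mpr hs⟩

lemma sat_one (P : Finset ℕ) :
    (oneModel P).sat ()
      (Form.and (bigAnd (P.image Form.pos)) (Form.box (bigAnd (P.image Form.pos)))) := by
  have h : (oneModel P).sat () (bigAnd (P.image Form.pos)) := by
    refine (sat_bigAnd (oneModel P) () _).mpr ?_
    intro χ hχ
    simp only [Finset.mem_image] at hχ
    obtain ⟨q, hq, rfl⟩ := hχ
    simpa [Model.sat, oneModel] using hq
  exact ⟨h, fun _ _ => h⟩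

lemma complete_of (l : Logic) (P : Finset ℕ)
    (hmod : ∀ M : Model, M.IsFor l →
      (∀ u, ∃ v, M.R u v) ∧ (∀ a b c, M.R a b → M.R b c → M.R a c)) :
    Complete l
      (Form.and (bigAnd (P.image Form.pos)) (Form.box (bigAnd (P.image Form.pos)))) := by
  intro ψ hψ
  set φ := Form.and (bigAnd (P.image Form.pos)) (Form.box (bigAnd (P.image Form.pos))) with hφ
  have hφvars : φ.vars ⊆ P := by
    intro p hp
    simp only [hφ, Form.vars, Finset.mem_union] at hp
    rcases hp with hp | hp <;> exact vars_bigAnd_pos P hp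
  have hψP : ψ.vars ⊆ P := hψ.trans hφvars
  have key : ∀ M : Model, M.IsFor l → ∀ w : M.W, M.sat w φ →
      (M.sat w ψ ↔ (oneModel P).sat () ψ) := by
    intro M hM w hw
    obtain ⟨hser, htr⟩ := hmod M hM
    obtain ⟨h1, h2⟩ := hw
    have hG : ∀ v, (v = w ∨ M.R w v) → ∀ p ∈ P, p ∈ M.V v := by
      intro v hv p hp
      have : M.sat v (bigAnd (P.image Form.pos)) := by
        rcases hv with rfl | hv
        · exact h1
        · exact h2 v hv
      have := (sat_bigAnd M v _).mp this (Form.pos p) (Finset.mem_image_of_mem _ hp)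
      exact this
    exact transfer M w hser htr P hG ψ hψP w (Or.inl rfl)
  by_cases h : (oneModel P).sat () ψ
  · left
    intro M hM w
    by_cases hw : M.sat w φ
    · exact Or.inr ((key M hM w hw).mpr h)
    · exact Or.inl ((sat_neg M φ w).mpr hw)
  · right
    intro M hM w
    by_cases hw : M.sat w φ
    · exact Or.inr ((sat_neg M ψ w).mpr (fun hs => h ((key M hM w hw).mp hs)))
    · exact Or.inl ((sat_neg M φ w).mpr hw)
lemma oneModel_isFor (P : Finset ℕ) (l : Logic) : (oneModel P).IsFor l := by
  refine ⟨?_, fun _ a b c _ _ => trivial⟩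
  cases l.base <;> simp [oneModel] <;>
    first
    | exact fun w => ⟨(), trivial⟩
    | exact fun a b c _ _ => trivial
    | exact ⟨fun w => ⟨(), trivial⟩, fun a b c _ _ => trivial⟩
    | exact ⟨fun w => trivial, fun a b c _ _ => trivial⟩

lemma hmodKD4 (l : Logic) (hb : l.base = .KD4) : ∀ M : Model, M.IsFor l →
    (∀ u, ∃ v, M.R u v) ∧ (∀ a b c, M.R a b → M.R b c → M.R a c) := by
  intro M hM
  obtain ⟨h1, _⟩ := hM
  rw [hb] at h1
  exact h1

lemma hmodS4 (l : Logic) (hb : l.base = .S4) : ∀ M : Model, M.IsFor l →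
    (∀ u, ∃ v, M.R u v) ∧ (∀ a b c, M.R a b → M.R b c → M.R a c) := by
  intro M hM
  obtain ⟨h1, _⟩ := hM
  rw [hb] at h1
  exact ⟨fun u => ⟨u, h1.1 u⟩, h1.2⟩

/-- ⋀_{p∈P} p ∧ □⋀_{p∈P} p is satisfiable and complete for KD4,
S4, KD4+5, and S4+5. -/
theorem stmt8 (P : Finset ℕ) :
    (Satisfiable Logic.KD4
        (Form.and (bigAnd (P.image Form.pos)) (Form.box (bigAnd (P.image Form.pos)))) ∧
     Complete Logic.KD4
        (Form.and (bigAnd (P.image Form.pos)) (Form.box (bigAnd (P.image Form.pos))))) ∧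
    (Satisfiable Logic.S4
        (Form.and (bigAnd (P.image Form.pos)) (Form.box (bigAnd (P.image Form.pos)))) ∧
     Complete Logic.S4
        (Form.and (bigAnd (P.image Form.pos)) (Form.box (bigAnd (P.image Form.pos))))) ∧
    (Satisfiable (BaseLogic.plus5 .KD4)
        (Form.and (bigAnd (P.image Form.pos)) (Form.box (bigAnd (P.image Form.pos)))) ∧
     Complete (BaseLogic.plus5 .KD4)
        (Form.and (bigAnd (P.image Form.pos)) (Form.box (bigAnd (P.image Form.pos))))) ∧
    (Satisfiable (BaseLogic.plus5 .S4)
        (Form.and (bigAnd (P.image Form.pos)) (Form.box (bigAnd (P.image Form.pos)))) ∧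
     Complete (BaseLogic.plus5 .S4)
        (Form.and (bigAnd (P.image Form.pos)) (Form.box (bigAnd (P.image Form.pos))))) := by
    refine ⟨⟨⟨oneModel P, oneModel_isFor P _, (), sat_one P⟩, complete_of _ P (hmodKD4 _ rfl)⟩,
    ⟨⟨oneModel P, oneModel_isFor P _, (), sat_one P⟩, complete_of _ P (hmodS4 _ rfl)⟩,
    ⟨⟨oneModel P, oneModel_isFor P _, (), sat_one P⟩, complete_of _ P (hmodKD4 _ rfl)⟩,
    ⟨⟨oneModel P, oneModel_isFor P _, (), sat_one P⟩, complete_of _ P (hmodS4 _ rfl)⟩⟩
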